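/- Let Q be a finite family of monic polynomials in ℝ[y], let t₁ < t₂ < … < t_r be real numbers (r ≥ 0), and suppose that each P ∈ Q factors as P(y) = ∏_{j=1}^{r} (y − t_j)^{m_{P,j}} · ∏_{k=1}^{n_P} ((y − a_{P,k})² + b_{P,k}²) with nonnegative integer exponents m_{P,j} and real numbers a_{P,k}, b_{P,k} with b_{P,k} ≠ 0. For 1 ≤ j ≤ r define the sign vector σ_j ∈ {−1,0,1}^Q by σ_j(P) = 0 if m_{P,j} > 0 and σ_j(P) = (−1)^{Σ_{j < j' ≤ r} m_{P,j'}} if m_{P,j} = 0, and for 1 ≤ j ≤ r+1 define σ_{(j−1,j)} ∈ {−1,0,1}^Q by σ_{(j−1,j)}(P) = (−1)^{Σ_{j ≤ j' ≤ r} m_{P,j'}} (empty sums being 0). Then the set { (sign(P(y)))_{P ∈ Q} : y ∈ ℝ } of realizable sign vectors on Q is exactly {σ_{(0,1)}, σ₁, σ_{(1,2)}, …, σ_r, σ_{(r,r+1)}}. -/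

import Mathlib

open Polynomial

private lemma gap_prod {r : ℕ} {t : ℕ → ℝ} {y : ℝ} (K : ℕ) (hK : K ≤ r)
    (h1 : ∀ j ∈ Finset.Ioc 0 K, t j < y) (h2 : ∀ j ∈ Finset.Ioc K r, y < t j)
    (mf : ℕ → ℕ) :
    ∏ j ∈ Finset.Ioc 0 r, (SignType.sign (y - t j)) ^ mf j
      = (-1) ^ (∑ j ∈ Finset.Ioc K r, mf j) := by
  rw [← Finset.prod_Ioc_consecutive _ (Nat.zero_le K) hK,
    Finset.prod_eq_one (fun j hj => by
      rw [sign_pos (by linarith [h1 j hj]), one_pow]), one_mul,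
    ← Finset.prod_pow_eq_pow_sum]
  exact Finset.prod_congr rfl fun j hj => by
    rw [sign_neg (by linarith [h2 j hj])]

private lemma root_prod {r : ℕ} {t : ℕ → ℝ}
    (ht : ∀ j j', 1 ≤ j → j < j' → j' ≤ r → t j < t j')
    (J : ℕ) (hJ1 : 1 ≤ J) (hJr : J ≤ r) (mf : ℕ → ℕ) :
    ∏ j ∈ Finset.Ioc 0 r, (SignType.sign (t J - t j)) ^ mf j
      = if 0 < mf J then 0 else (-1) ^ (∑ j ∈ Finset.Ioc J r, mf j) := by
  rw [← Finset.prod_Ioc_consecutive _ (Nat.zero_le J) hJr]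
  have h2 : ∏ j ∈ Finset.Ioc J r, (SignType.sign (t J - t j)) ^ mf j
      = (-1) ^ (∑ j ∈ Finset.Ioc J r, mf j) := by
    rw [← Finset.prod_pow_eq_pow_sum]
    refine Finset.prod_congr rfl fun j hj => ?_
    rw [Finset.mem_Ioc] at hj
    rw [sign_neg (by linarith [ht J j hJ1 hj.1 hj.2])]
  rw [h2]
  by_cases h : 0 < mf J
  · rw [if_pos h, Finset.prod_eq_zero (Finset.mem_Ioc.2 ⟨hJ1, le_refl J⟩), zero_mul]
    rw [sub_self, sign_zero, zero_pow h.ne']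
  · rw [if_neg h, Finset.prod_eq_one, one_mul]
    intro j hj
    rw [Finset.mem_Ioc] at hj
    rcases eq_or_lt_of_le hj.2 with rfl | hlt
    · rw [Nat.eq_zero_of_not_pos h, pow_zero]
    · rw [sign_pos (by linarith [ht j J hj.1 hlt hJr]), one_pow]

/-- Semantic content of Proposition `weaksigndettab2`: for a finite family of
monic real polynomials factored over the ordered real roots `t₁ < … < t_r`
(with positive-definite quadratic factors, `r ≥ 0`), the set of realizable
sign vectors on the family is exactly
`{σ_{(0,1)}, σ₁, σ_{(1,2)}, …, σ_r, σ_{(r,r+1)}}`, where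
`σ_j(P) = 0` if `m_{P,j} > 0` and `σ_j(P) = (-1)^{∑_{j < j' ≤ r} m_{P,j'}}`
otherwise, and `σ_{(j-1,j)}(P) = (-1)^{∑_{j ≤ j' ≤ r} m_{P,j'}}`. -/
theorem realizable_sign_vectors (ι : Type*) [Fintype ι] (Pf : ι → Polynomial ℝ)
    (hmon : ∀ i, (Pf i).Monic)
    (r : ℕ) (t : ℕ → ℝ)
    (ht : ∀ j j', 1 ≤ j → j < j' → j' ≤ r → t j < t j')
    (m : ι → ℕ → ℕ) (n : ι → ℕ) (a b : ι → ℕ → ℝ)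
    (hb : ∀ i k, 1 ≤ k → k ≤ n i → b i k ≠ 0)
    (hfact : ∀ i, Pf i =
      (∏ j ∈ Finset.Icc 1 r, (X - C (t j)) ^ m i j) *
        ∏ k ∈ Finset.Icc 1 (n i), ((X - C (a i k)) ^ 2 + C (b i k) ^ 2)) :
    {s : ι → SignType | ∃ y : ℝ, ∀ i, s i = SignType.sign ((Pf i).eval y)} =
      {s : ι → SignType |
        (∃ j, 1 ≤ j ∧ j ≤ r ∧ ∀ i, s i =
          if 0 < m i j then 0
          else (-1 : SignType) ^ ∑ j' ∈ Finset.Icc (j + 1) r, m i j') ∨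
        (∃ j, 1 ≤ j ∧ j ≤ r + 1 ∧ ∀ i, s i =
          (-1 : SignType) ^ ∑ j' ∈ Finset.Icc j r, m i j')} := by
  classical
  have tmono : ∀ j j', 1 ≤ j → j ≤ j' → j' ≤ r → t j ≤ t j' := by
    intro j j' h1 h2 h3
    rcases eq_or_lt_of_le h2 with rfl | h
    · exact le_rfl
    · exact (ht _ _ h1 h h3).le
  -- key sign computation
  have hsign : ∀ (y : ℝ) (i : ι), SignType.sign ((Pf i).eval y)
      = ∏ j ∈ Finset.Ioc 0 r, (SignType.sign (y - t j)) ^ m i j := by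
    intro y i
    rw [hfact i]
    simp only [eval_mul, eval_prod, eval_pow, eval_add, eval_sub, eval_X, eval_C]
    have hpos : 0 < ∏ k ∈ Finset.Icc 1 (n i), ((y - a i k) ^ 2 + (b i k) ^ 2) := by
      refine Finset.prod_pos fun k hk => ?_
      rw [Finset.mem_Icc] at hk
      have hbk := hb i k hk.1 hk.2
      positivity
    have hIcc : Finset.Icc 1 r = Finset.Ioc 0 r := by ext x; simp; omega
    rw [sign_mul, sign_pos hpos, mul_one, hIcc]
    rw [show SignType.sign (∏ j ∈ Finset.Ioc 0 r, (y - t j) ^ m i j)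
        = ∏ j ∈ Finset.Ioc 0 r, SignType.sign ((y - t j) ^ m i j)
      from map_prod signHom _ _]
    exact Finset.prod_congr rfl fun j _ => sign_pow _ _
  ext s
  simp only [Set.mem_setOf_eq]
  constructor
  · rintro ⟨y, hy⟩
    by_cases hroot : ∃ J, 1 ≤ J ∧ J ≤ r ∧ y = t J
    · obtain ⟨J, hJ1, hJr, rfl⟩ := hroot
      left
      refine ⟨J, hJ1, hJr, fun i => ?_⟩
      have hIcc : Finset.Icc (J + 1) r = Finset.Ioc J r := by ext x; simp
      rw [hy i, hsign (t J) i, root_prod ht J hJ1 hJr, hIcc]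
    · right
      have hP : ∃ K, ∀ j ∈ Finset.Ioc K r, y < t j := ⟨r, by simp⟩
      set K := Nat.find hP with hKdef
      have hK : K ≤ r := Nat.find_le (by simp)
      have h2 : ∀ j ∈ Finset.Ioc K r, y < t j := Nat.find_spec hP
      have h1 : ∀ j ∈ Finset.Ioc 0 K, t j < y := by
        intro j hj
        rw [Finset.mem_Ioc] at hj
        have hjK : j - 1 < K := by omega
        have := Nat.find_min hP hjK
        push_neg at this
        obtain ⟨j', hj', hj'le⟩ := this
        rw [Finset.mem_Ioc] at hj'
        have hj'lt : t j' < y := by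
          rcases lt_or_eq_of_le hj'le with h | h
          · exact h
          · exact absurd ⟨j', by omega, hj'.2, h.symm⟩ hroot
        have : t j ≤ t j' := tmono j j' (by omega) (by omega) hj'.2
        linarith
      refine ⟨K + 1, by omega, by omega, fun i => ?_⟩
      have hIcc : Finset.Icc (K + 1) r = Finset.Ioc K r := by ext x; simp
      rw [hy i, hsign y i, gap_prod K hK h1 h2, hIcc]
  · rintro (⟨J, hJ1, hJr, hs⟩ | ⟨J, hJ1, hJr, hs⟩)
    · refine ⟨t J, fun i => ?_⟩
      have hIcc : Finset.Icc (J + 1) r = Finset.Ioc J r := by ext x; simp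
      rw [hs i, hsign (t J) i, root_prod ht J hJ1 hJr, hIcc]
    · set K := J - 1 with hKdef
      have hJK : J = K + 1 := by omega
      have hK : K ≤ r := by omega
      have hy : ∃ y : ℝ, (∀ j ∈ Finset.Ioc 0 K, t j < y) ∧
          (∀ j ∈ Finset.Ioc K r, y < t j) := by
        by_cases hK0 : K = 0
        · by_cases hr0 : r = 0
          · exact ⟨0, by simp [hK0], by simp [hK0, hr0]⟩
          · refine ⟨t 1 - 1, by simp [hK0], fun j hj => ?_⟩
            rw [Finset.mem_Ioc] at hj
            have : t 1 ≤ t j := tmono 1 j le_rfl (by omega) hj.2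
            linarith
        · rcases eq_or_lt_of_le hK with hKr | hKr
          · refine ⟨t r + 1, fun j hj => ?_, by simp [hKr]⟩
            rw [Finset.mem_Ioc, hKr] at hj
            have : t j ≤ t r := tmono j r hj.1 hj.2 le_rfl
            linarith
          · refine ⟨(t K + t (K + 1)) / 2, fun j hj => ?_, fun j hj => ?_⟩
            · rw [Finset.mem_Ioc] at hj
              have h1 : t j ≤ t K := tmono j K hj.1 hj.2 hK
              have h2 : t K < t (K + 1) := ht K (K + 1) (by omega) (by omega) hKr
              linarith
            · rw [Finset.mem_Ioc] at hj
              have h1 : t (K + 1) ≤ t j := tmono (K + 1) j (by omega) (by omega) hj.2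
              have h2 : t K < t (K + 1) := ht K (K + 1) (by omega) (by omega) hKr
              linarith
      obtain ⟨y, h1, h2⟩ := hy
      refine ⟨y, fun i => ?_⟩
      have hIcc : Finset.Icc (K + 1) r = Finset.Ioc K r := by ext x; simp
      rw [hs i, hsign y i, gap_prod K hK h1 h2, hJK, hIcc]
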